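/- Let G be a connected graph with χ(G) ≡ 2 (mod 4) such that some proper χ(G)-vertex coloring of G has a color class of even size. Then G admits a proper χ(G)-vertex coloring f with colors in {0, ..., χ(G)−1} such that Σ_{v ∈ V(G)} f(v) is even. -/

import Mathlib

open Finset

-- The vertex label induced by an edge coloring: `twinLabel G s v = Σ_{e ∈ E_v} s e` in `ZMod k`.
open scoped Classical in
noncomputable def twinLabel {V : Type*} [Fintype V] (G : SimpleGraph V) {k : ℕ}
    (s : Sym2 V → ZMod k) (v : V) : ZMod k :=
  ∑ e ∈ G.incidenceFinset v, s e

/-- `s` is an improper twin `k`-edge coloring of `G`: the induced vertex labeling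
is a proper vertex coloring. -/
def IsImproperTwin {V : Type*} [Fintype V] (G : SimpleGraph V) (k : ℕ)
    (s : Sym2 V → ZMod k) : Prop :=
  ∀ ⦃u v : V⦄, G.Adj u v → twinLabel G s u ≠ twinLabel G s v

/-- The improper twin chromatic index: the least `k ≥ 2` admitting an improper twin
`k`-edge coloring. -/
noncomputable def improperTwinIndex {V : Type*} [Fintype V] (G : SimpleGraph V) : ℕ :=
  sInf {k | 2 ≤ k ∧ ∃ s : Sym2 V → ZMod k, IsImproperTwin G k s}

theorem stmt_11 {V : Type*} [Fintype V] (G : SimpleGraph V) (hG : G.Connected)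
    (n : ℕ) (hn : G.chromaticNumber = n) (h4 : n % 4 = 2)
    (heven : ∃ C : G.Coloring (Fin n), ∃ i : Fin n, Even (C.colorClass i).ncard) :
    ∃ f : V → Fin n, (∀ ⦃u w : V⦄, G.Adj u w → f u ≠ f w) ∧
      Even (∑ v : V, (f v : ℕ)) := by
  classical
  obtain ⟨C, i, hi⟩ := heven
  have hn0 : 0 < n := by omega
  have : NeZero n := ⟨by omega⟩
  set c : Fin n → ℕ := fun j => (Finset.univ.filter (fun v => C v = j)).card with hcdef
  set m : Fin n → ZMod 2 := fun j => ((j : ℕ) : ZMod 2) with hmdef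
  set cc : Fin n → ZMod 2 := fun j => ((c j : ℕ) : ZMod 2) with hccdef
  -- fiber sum lemma
  have key : ∀ h : Fin n → ZMod 2, (∑ v : V, h (C v)) = ∑ j : Fin n, (c j) • h j := by
    intro h
    rw [← Finset.sum_fiberwise' Finset.univ (fun v => C v) h]
    exact Finset.sum_congr rfl fun j _ => (Finset.sum_const _)
  -- evenness via ZMod 2
  have evencast : ∀ N : ℕ, ((N : ZMod 2) = 0) → Even N := by
    intro N hN
    have := (ZMod.natCast_eq_zero_iff N 2).mp hN
    exact (Nat.even_iff).mpr (by omega)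
  have castsum : ∀ f : V → Fin n, ((∑ v : V, (f v : ℕ) : ℕ) : ZMod 2) =
      ∑ v : V, (((f v : ℕ) : ZMod 2)) := by
    intro f; push_cast; rfl
  -- cc i = 0
  have hcci : cc i = 0 := by
    have : (C.colorClass i).ncard = c i := by
      rw [hcdef]
      rw [Set.ncard_eq_toFinset_card']
      congr 1
      ext v
      rw [Set.mem_toFinset]; simp [SimpleGraph.Coloring.colorClass]
    rw [hccdef]
    have hE : Even (c i) := this ▸ hi
    have h2 : (2 : ℕ) ∣ c i := hE.two_dvd
    exact (ZMod.natCast_eq_zero_iff _ 2).mpr h2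
  set S2 : ZMod 2 := ∑ j : Fin n, (c j) • m j with hS2
  have hsum : ((∑ v : V, (C v : ℕ) : ℕ) : ZMod 2) = S2 := by
    rw [castsum, key m]
  have htwo : ∀ x : ZMod 2, x = 0 ∨ x = 1 := by decide
  rcases htwo S2 with h0 | h1
  · exact ⟨C, fun u w h => C.valid h, evencast _ (by rw [hsum, h0])⟩
  -- odd case: find a with m a = 1, cc a = 1
  have ha : ∃ a : Fin n, m a = 1 ∧ cc a = 1 := by
    by_contra hcon
    push_neg at hcon
    have : S2 = 0 := by
      rw [hS2]
      apply Finset.sum_eq_zero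
      intro j _
      have hj : (c j) • m j = cc j * m j := by
        rw [hccdef, nsmul_eq_mul]
      rcases htwo (m j) with hm0 | hm1
      · rw [hj, hm0, mul_zero]
      · rcases htwo (cc j) with hc0 | hc1
        · rw [hj, hc0, zero_mul]
        · exact absurd hc1 (hcon j hm1)
    rw [this] at h1; exact absurd h1 (by decide)
  obtain ⟨a, hma, hcca⟩ := ha
  -- choose b
  have hm0 : m (0 : Fin n) = 0 := by
    rw [hmdef]
    simp [Fin.val_zero]
  -- pick pair (p, q) with m p + m q = 1 and cc p + cc q = 1
  obtain ⟨p, q, hpq1, hpq2⟩ : ∃ p q : Fin n, m p + m q = 1 ∧ cc p + cc q = 1 := by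
    rcases htwo (m i) with hmi | hmi
    · exact ⟨a, i, by rw [hma, hmi, add_zero], by rw [hcca, hcci, add_zero]⟩
    · rcases htwo (cc 0) with hc0 | hc0
      · exact ⟨a, 0, by rw [hma, hm0, add_zero], by rw [hcca, hc0, add_zero]⟩
      · exact ⟨i, 0, by rw [hmi, hm0, add_zero], by rw [hcci, hc0, zero_add]⟩
  have hpq : p ≠ q := by
    intro h; rw [h] at hpq1
    rcases htwo (m q) with h' | h' <;> rw [h'] at hpq1 <;> revert hpq1 <;> decide
  set σ := Equiv.swap p q with hσ
  refine ⟨fun v => σ (C v), fun u w h => fun he => C.valid h (σ.injective he), ?_⟩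
  apply evencast
  rw [castsum]
  have : (∑ v : V, (((σ (C v) : Fin n) : ℕ) : ZMod 2)) = ∑ j : Fin n, (c j) • m (σ j) :=
    key (fun j => m (σ j))
  rw [this]
  -- compute: ∑ c j • m (σ j) + S2 = (cc p + cc q) * (m p + m q) = 1, so sum = 0
  have hdiff : (∑ j : Fin n, (c j) • m (σ j)) + S2 = (cc p + cc q) * (m p + m q) := by
    rw [hS2, ← Finset.sum_add_distrib]
    have : ∀ j : Fin n, (c j) • m (σ j) + (c j) • m j = cc j * (m (σ j) + m j) := by
      intro j; rw [hccdef, nsmul_eq_mul, nsmul_eq_mul, mul_add]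
    rw [Finset.sum_congr rfl (fun j _ => this j)]
    rw [Finset.sum_eq_add p q hpq ?h0 (by simp) (by simp)]
    · rw [hσ, Equiv.swap_apply_left, Equiv.swap_apply_right]
      ring
    · intro j _ hj
      rw [hσ, Equiv.swap_apply_of_ne_of_ne hj.1 hj.2, CharTwo.add_self_eq_zero, mul_zero]
  have h1' : (cc p + cc q) * (m p + m q) = 1 := by rw [hpq1, hpq2, mul_one]
  rw [h1', h1] at hdiff
  have h0' : (∑ j : Fin n, (c j) • m (σ j)) + 1 = 0 + 1 := by rw [hdiff, zero_add]
  exact add_right_cancel h0'
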